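/- Let n ≥ 2, X = (x₁,…,xₙ) with xᵢ ≥ 0, and α = (α₁,…,αₙ) with αᵢ > 0 and Σ αᵢ = 1. Then Σ αᵢ xᵢ − Π xᵢ^{αᵢ} ≤ (1/α_min)·Var_α(X^{1/2}). -/

import Mathlib

set_option maxHeartbeats 1000000

open Finset

private lemma bern (t r : ℝ) (ht : 0 ≤ t) (hr : 1 ≤ r) : 1 + r * (t - 1) ≤ t ^ r := by
  have h := one_add_mul_self_le_rpow_one_add (by linarith : (-1:ℝ) ≤ t - 1) hr
  have e : (1 : ℝ) + (t - 1) = t := by ring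
  rwa [e] at h

private lemma sq_rpow (x c : ℝ) (hx : 0 ≤ x) : (x ^ 2) ^ c = (x ^ c) ^ 2 := by
  rw [← Real.rpow_natCast x 2, ← Real.rpow_natCast (x ^ c) 2, ← Real.rpow_mul hx,
    ← Real.rpow_mul hx]
  norm_num [mul_comm]

private lemma asym (p q U V : ℝ) (hp : 0 < p) (hq : 0 < q) (hpq : p + q = 1)
    (hpl : p ≤ q) (hU : 0 ≤ U) (hV : 0 ≤ V) :
    p * (p * U + q * V - U ^ p * V ^ q) ≤
      p * U + q * V - (p * Real.sqrt U + q * Real.sqrt V) ^ 2 := by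
  have hq1 : q = 1 - p := by linarith
  subst hq1
  have ha : 0 ≤ Real.sqrt U := Real.sqrt_nonneg U
  have hb : 0 ≤ Real.sqrt V := Real.sqrt_nonneg V
  set a := Real.sqrt U with hadef
  set b := Real.sqrt V with hbdef
  have hUa : U = a ^ 2 := (Real.sq_sqrt hU).symm
  have hVb : V = b ^ 2 := (Real.sq_sqrt hV).symm
  have key : (p - (1-p)) * a ^ 2 + 2 * (1-p) * (a * b) ≤ U ^ p * V ^ (1-p) := by
    by_cases hU0 : U = 0
    · have ha0 : a = 0 := by rw [hadef, hU0, Real.sqrt_zero]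
      rw [hU0, Real.zero_rpow hp.ne', ha0]
      norm_num
    · have hUpos : 0 < U := lt_of_le_of_ne hU (Ne.symm hU0)
      have hapos : 0 < a := Real.sqrt_pos.mpr hUpos
      set t := b / a with htdef
      have htn : 0 ≤ t := div_nonneg hb hapos.le
      have hbt : b = t * a := by rw [htdef, div_mul_cancel₀ _ hapos.ne']
      have hprod : U ^ p * V ^ (1-p) = a ^ 2 * t ^ (2 * (1-p)) := by
        have hV2 : V = t ^ 2 * a ^ 2 := by rw [hVb, hbt]; ring
        rw [hUa, hV2, Real.mul_rpow (by positivity) (by positivity)]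
        rw [sq_rpow t (1-p) htn, sq_rpow a p hapos.le, sq_rpow a (1-p) hapos.le]
        have : (a ^ p) ^ 2 * ((t ^ (1-p)) ^ 2 * (a ^ (1-p)) ^ 2)
            = (a ^ p * a ^ (1-p)) ^ 2 * (t ^ (1-p)) ^ 2 := by ring
        rw [this, ← Real.rpow_add hapos]
        have e1 : p + (1 - p) = 1 := by ring
        rw [e1, Real.rpow_one]
        have e2 : t ^ (2 * (1-p)) = (t ^ (1-p)) ^ 2 := by
          rw [← Real.rpow_natCast (t ^ (1-p)) 2, ← Real.rpow_mul htn]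
          norm_num [mul_comm]
        rw [e2]
      rw [hprod]
      have hbern := bern t (2 * (1-p)) htn (by linarith)
      have h2 := mul_le_mul_of_nonneg_left hbern (sq_nonneg a)
      calc (p - (1-p)) * a ^ 2 + 2 * (1-p) * (a * b)
          = a ^ 2 * (1 + (2 * (1-p)) * (t - 1)) := by rw [hbt]; ring
        _ ≤ a ^ 2 * t ^ (2 * (1-p)) := h2
  rw [hUa, hVb] at key ⊢
  nlinarith [mul_le_mul_of_nonneg_left key hp.le]

private lemma two_var (p q U V : ℝ) (hp : 0 < p) (hq : 0 < q) (hpq : p + q = 1)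
    (hU : 0 ≤ U) (hV : 0 ≤ V) :
    min p q * (p * U + q * V - U ^ p * V ^ q) ≤
      p * U + q * V - (p * Real.sqrt U + q * Real.sqrt V) ^ 2 := by
  rcases le_total p q with h | h
  · rw [min_eq_left h]
    exact asym p q U V hp hq hpq h hU hV
  · rw [min_eq_right h]
    have := asym q p V U hq hp (by linarith) h hV hU
    nlinarith [this]

private lemma cauchy2 (p q a b : ℝ) (hp : 0 < p) (hq : 0 < q) (ha : 0 ≤ a) (hb : 0 ≤ b) :
    (p * a + q * b) ^ 2 ≤ (p + q) * (p * a ^ 2 + q * b ^ 2) := by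
  nlinarith [sq_nonneg (a - b), mul_pos hp hq]

private lemma wlemma (m p q : ℝ) (hm : 0 < m) (hq : 0 < q) (hmp : m ≤ p) (hsum : p + q ≤ 1 - m) :
    m * q ≤ (1 - m) * (p + q) * p := by
  have hid : (1-m) * (p + q) * p - m * q
      = (1-m) * (p + q) * (p - m) + m * (p - m * (p + q)) := by ring
  have h1m : 0 < 1 - m := by linarith
  have hq0 : 0 < p + q := by linarith
  have t1 : 0 ≤ (1-m) * (p + q) * (p - m) :=
    mul_nonneg (mul_nonneg h1m.le hq0.le) (by linarith)
  have t2 : 0 ≤ m * (p - m * (p + q)) := by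
    apply mul_nonneg hm.le
    have h4 : m * (p + q) ≤ m * (1 - m) := mul_le_mul_of_nonneg_left hsum hm.le
    have h5 : m * (1 - m) ≤ m * 1 := mul_le_mul_of_nonneg_left (by linarith) hm.le
    linarith
  linarith [t1, t2, hid.ge, hid.le]

private lemma key_ineq {ι : Type*} [DecidableEq ι] (m : ℝ) (hm : 0 < m) :
    ∀ (N : ℕ) (s : Finset ι) (α u : ι → ℝ), s.card ≤ N →
    (∀ i ∈ s, 0 < α i) → (∀ i ∈ s, 0 ≤ u i) → (∑ i ∈ s, α i) = 1 →
    (∀ i ∈ s, m ≤ α i) →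
    m * ((∑ i ∈ s, α i * u i) - ∏ i ∈ s, u i ^ α i) ≤
      (∑ i ∈ s, α i * u i) - (∑ i ∈ s, α i * Real.sqrt (u i)) ^ 2 := by
  intro N
  induction N with
  | zero =>
    intro s α u hcard hα hu hsum hmle
    have : s = ∅ := Finset.card_eq_zero.mp (Nat.le_zero.mp hcard)
    subst this
    simp at hsum
  | succ N IH =>
    intro s α u hcard hα hu hsum hmle
    rcases lt_or_ge s.card 3 with hsmall | hbig
    · -- small cases
      have h012 : s.card = 0 ∨ s.card = 1 ∨ s.card = 2 := by omega
      rcases h012 with h0 | h1 | h2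
      · have : s = ∅ := Finset.card_eq_zero.mp h0
        subst this; simp at hsum
      · obtain ⟨i, rfl⟩ := Finset.card_eq_one.mp h1
        rw [Finset.sum_singleton] at hsum
        simp only [Finset.sum_singleton, Finset.prod_singleton]
        rw [hsum]
        simp [Real.rpow_one, Real.sq_sqrt (hu i (Finset.mem_singleton_self i))]
      · obtain ⟨i, j, hij, rfl⟩ := Finset.card_eq_two.mp h2
        have hi : i ∈ ({i, j} : Finset ι) := by simp
        have hj : j ∈ ({i, j} : Finset ι) := by simp
        rw [Finset.sum_pair hij] at hsum
        simp only [Finset.sum_pair hij, Finset.prod_pair hij]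
        have h2v := two_var (α i) (α j) (u i) (u j) (hα i hi) (hα j hj) hsum
          (hu i hi) (hu j hj)
        have hgap : 0 ≤ α i * u i + α j * u j - u i ^ α i * u j ^ α j := by
          have := Real.geom_mean_le_arith_mean2_weighted (hα i hi).le (hα j hj).le
            (hu i hi) (hu j hj) hsum
          linarith
        have hmmin : m ≤ min (α i) (α j) := le_min (hmle i hi) (hmle j hj)
        linarith only [mul_le_mul_of_nonneg_right hmmin hgap, h2v]
    · -- main inductive step, card ≥ 3
      have hne : s.Nonempty := Finset.card_pos.mp (by omega)
      obtain ⟨i, hi, hmaxi⟩ := s.exists_max_image u hne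
      have hne1 : (s.erase i).Nonempty := by
        rw [← Finset.card_pos, Finset.card_erase_of_mem hi]; omega
      obtain ⟨j, hj1, hmaxj⟩ := (s.erase i).exists_max_image u hne1
      have hji : j ≠ i := (Finset.mem_erase.mp hj1).1
      have hjs : j ∈ s := (Finset.mem_erase.mp hj1).2
      have his' : i ∈ s.erase j := Finset.mem_erase.mpr ⟨hji.symm, hi⟩
      set t := (s.erase j).erase i with htdef
      have hts : ∀ r ∈ t, r ∈ s ∧ r ≠ i ∧ r ≠ j := by
        intro r hr
        have h1 := Finset.mem_erase.mp hr
        have h2 := Finset.mem_erase.mp h1.2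
        exact ⟨h2.2, h1.1, h2.1⟩
      have htcard : 1 ≤ t.card := by
        rw [htdef, Finset.card_erase_of_mem his', Finset.card_erase_of_mem hjs]; omega
      obtain ⟨r₀, hr₀⟩ := Finset.card_pos.mp (by omega : 0 < t.card)
      have hp : 0 < α i := hα i hi
      have hq : 0 < α j := hα j hjs
      set β := α i + α j with hβdef
      have hβ : 0 < β := by positivity
      have ha : 0 ≤ Real.sqrt (u i) := Real.sqrt_nonneg _
      have hb : 0 ≤ Real.sqrt (u j) := Real.sqrt_nonneg _
      have hui : u i = Real.sqrt (u i) ^ 2 := (Real.sq_sqrt (hu i hi)).symm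
      have huj : u j = Real.sqrt (u j) ^ 2 := (Real.sq_sqrt (hu j hjs)).symm
      have hba : Real.sqrt (u j) ≤ Real.sqrt (u i) := Real.sqrt_le_sqrt (hmaxi j hjs)
      set sv := (α i * Real.sqrt (u i) + α j * Real.sqrt (u j)) / β with hsvdef
      have hsv : 0 ≤ sv := by positivity
      set v := sv ^ 2 with hvdef
      have hv0 : 0 ≤ v := sq_nonneg sv
      have hsvv : Real.sqrt v = sv := Real.sqrt_sq hsv
      have hbsv : Real.sqrt (u j) ≤ sv := by
        rw [hsvdef, le_div_iff₀ hβ, hβdef]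
        linarith only [mul_le_mul_of_nonneg_left hba hp.le]
      have hujv : u j ≤ v := by
        rw [huj, hvdef]; exact pow_le_pow_left₀ hb hbsv 2
      have hurv : ∀ r ∈ t, u r ≤ v := by
        intro r hr
        have hrs : r ∈ s.erase i := Finset.mem_erase.mpr ⟨(hts r hr).2.1, (hts r hr).1⟩
        exact le_trans (hmaxj r hrs) hujv
      -- decompositions
      have hsum_s : ∀ f : ι → ℝ, (∑ r ∈ s, f r) = f j + (f i + ∑ r ∈ t, f r) := by
        intro f
        rw [← Finset.add_sum_erase s f hjs, ← Finset.add_sum_erase (s.erase j) f his']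
      have hprod_s : ∀ f : ι → ℝ, (∏ r ∈ s, f r) = f j * (f i * ∏ r ∈ t, f r) := by
        intro f
        rw [← Finset.mul_prod_erase s f hjs, ← Finset.mul_prod_erase (s.erase j) f his']
      have htα : (∑ r ∈ t, α r) = 1 - β := by
        have h := hsum_s α
        rw [hsum] at h; rw [hβdef]; linarith only [h]
      have hβ1m : β ≤ 1 - m := by
        have h1 : m ≤ α r₀ := hmle r₀ (hts r₀ hr₀).1
        have h2 : α r₀ ≤ ∑ r ∈ t, α r :=
          Finset.single_le_sum (fun r hr => (hα r (hts r hr).1).le) hr₀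
        linarith only [h1, h2, htα]
      have h1m : 0 < 1 - m := lt_of_lt_of_le hβ hβ1m
      -- updated system
      set α' := Function.update α i β with hα'def
      set u' := Function.update u i v with hu'def
      have hsum_s' : ∀ f : ι → ℝ, (∑ r ∈ s.erase j, f r) = f i + ∑ r ∈ t, f r := by
        intro f
        rw [← Finset.add_sum_erase (s.erase j) f his']
      have hprod_s' : ∀ f : ι → ℝ, (∏ r ∈ s.erase j, f r) = f i * ∏ r ∈ t, f r := by
        intro f
        rw [← Finset.mul_prod_erase (s.erase j) f his']
      have hαi' : α' i = β := Function.update_self i β α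
      have hui' : u' i = v := Function.update_self i v u
      have hα'r : ∀ r ∈ t, α' r = α r := fun r hr =>
        Function.update_of_ne (hts r hr).2.1 β α
      have hu'r : ∀ r ∈ t, u' r = u r := fun r hr =>
        Function.update_of_ne (hts r hr).2.1 v u
      have hSα' : (∑ r ∈ s.erase j, α' r * u' r) = β * v + ∑ r ∈ t, α r * u r := by
        rw [hsum_s' (fun r => α' r * u' r), hαi', hui']
        congr 1
        exact Finset.sum_congr rfl fun r hr => by rw [hα'r r hr, hu'r r hr]
      have hWα' : (∑ r ∈ s.erase j, α' r * Real.sqrt (u' r)) =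
          (α i * Real.sqrt (u i) + α j * Real.sqrt (u j)) + ∑ r ∈ t, α r * Real.sqrt (u r) := by
        rw [hsum_s' (fun r => α' r * Real.sqrt (u' r)), hαi', hui', hsvv]
        have : β * sv = α i * Real.sqrt (u i) + α j * Real.sqrt (u j) := by
          rw [hsvdef]; field_simp
        rw [this]
        congr 1
        exact Finset.sum_congr rfl fun r hr => by rw [hα'r r hr, hu'r r hr]
      have hPα' : (∏ r ∈ s.erase j, u' r ^ α' r) = v ^ β * ∏ r ∈ t, u r ^ α r := by
        rw [hprod_s' (fun r => u' r ^ α' r), hαi', hui']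
        congr 1
        exact Finset.prod_congr rfl fun r hr => by rw [hα'r r hr, hu'r r hr]
      have hsumα' : (∑ r ∈ s.erase j, α' r) = 1 := by
        rw [hsum_s' α', hαi']
        have : (∑ r ∈ t, α' r) = ∑ r ∈ t, α r :=
          Finset.sum_congr rfl fun r hr => hα'r r hr
        rw [this, htα]; ring
      have hcard' : (s.erase j).card ≤ N := by
        rw [Finset.card_erase_of_mem hjs]; omega
      have hIH := IH (s.erase j) α' u' hcard'
        (by
          intro r hr
          by_cases hri : r = i
          · rw [hri, hαi']; exact hβ
          · rw [hα'def, Function.update_of_ne hri]; exact hα r (Finset.mem_of_mem_erase hr))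
        (by
          intro r hr
          by_cases hri : r = i
          · rw [hri, hui']; exact hv0
          · rw [hu'def, Function.update_of_ne hri]; exact hu r (Finset.mem_of_mem_erase hr))
        hsumα'
        (by
          intro r hr
          by_cases hri : r = i
          · rw [hri, hαi', hβdef]; linarith only [hmle i hi, hq.le]
          · rw [hα'def, Function.update_of_ne hri]; exact hmle r (Finset.mem_of_mem_erase hr))
      rw [hSα', hWα', hPα'] at hIH
      -- KEY STEP
      have hKEY : m * (v ^ β * (∏ r ∈ t, u r ^ α r) - u i ^ α i * u j ^ α j * ∏ r ∈ t, u r ^ α r)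
          ≤ (1 - m) * (α i * u i + α j * u j - β * v) := by
        by_cases hsv0 : sv = 0
        · have hnum : α i * Real.sqrt (u i) + α j * Real.sqrt (u j) = 0 := by
            have := hsv0
            rw [hsvdef, div_eq_zero_iff] at this
            rcases this with h | h
            · exact h
            · exact absurd h hβ.ne'
          have h1 : 0 ≤ α i * Real.sqrt (u i) := mul_nonneg hp.le ha
          have h2 : 0 ≤ α j * Real.sqrt (u j) := mul_nonneg hq.le hb
          have hA : α i * Real.sqrt (u i) = 0 := by linarith only [h1, h2, hnum]
          have hB : α j * Real.sqrt (u j) = 0 := by linarith only [h1, h2, hnum]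
          have ha0 : Real.sqrt (u i) = 0 := (mul_eq_zero.mp hA).resolve_left hp.ne'
          have hb0 : Real.sqrt (u j) = 0 := (mul_eq_zero.mp hB).resolve_left hq.ne'
          have hui0 : u i = 0 := by rw [hui, ha0]; ring
          have huj0 : u j = 0 := by rw [huj, hb0]; ring
          have hv0' : v = 0 := by rw [hvdef, hsv0]; ring
          rw [hui0, huj0, hv0', Real.zero_rpow hβ.ne', Real.zero_rpow hp.ne']
          simp
        · have hsvpos : 0 < sv := lt_of_le_of_ne hsv (Ne.symm hsv0)
          have hvpos : 0 < v := by positivity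
          set g := u i ^ (α i / β) * u j ^ (α j / β) with hgdef
          have hg0 : 0 ≤ g := by
            rw [hgdef]
            exact mul_nonneg (Real.rpow_nonneg (hu i hi) _) (Real.rpow_nonneg (hu j hjs) _)
          have hsβ : α i / β + α j / β = 1 := by field_simp; exact hβdef.symm
          have h2 := two_var (α i / β) (α j / β) (u i) (u j)
            (div_pos hp hβ) (div_pos hq hβ) hsβ (hu i hi) (hu j hjs)
          have hsv2 : α i / β * Real.sqrt (u i) + α j / β * Real.sqrt (u j) = sv := by
            rw [hsvdef]; ring
          rw [hsv2] at h2
          rw [← hvdef] at h2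
          have hmin : min (α i / β) (α j / β) = min (α i) (α j) / β :=
            min_div_div_right hβ.le _ _
          set Tq := (α i * u i + α j * u j) / β with hTqdef
          have hTq2 : α i / β * u i + α j / β * u j = Tq := by rw [hTqdef]; ring
          rw [hTq2, hmin, ← hgdef] at h2
          have hminpos : 0 < min (α i) (α j) := lt_min hp hq
          have hβTq : β * Tq = α i * u i + α j * u j := by
            rw [hTqdef]; field_simp
          have hTv : 0 ≤ Tq - v := by
            have hcs : (α i * Real.sqrt (u i) + α j * Real.sqrt (u j)) ^ 2
                ≤ β * (α i * u i + α j * u j) := by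
              have h0 := cauchy2 (α i) (α j) (Real.sqrt (u i)) (Real.sqrt (u j)) hp hq ha hb
              rw [Real.sq_sqrt (hu i hi), Real.sq_sqrt (hu j hjs), ← hβdef] at h0
              exact h0
            rw [sub_nonneg, hvdef, hsvdef, hTqdef, div_pow, div_le_div_iff₀ (by positivity) hβ]
            calc (α i * Real.sqrt (u i) + α j * Real.sqrt (u j)) ^ 2 * β
                ≤ (β * (α i * u i + α j * u j)) * β := mul_le_mul_of_nonneg_right hcs hβ.le
              _ = (α i * u i + α j * u j) * β ^ 2 := by ring
          have h5 : min (α i) (α j) * (Tq - g) ≤ β * (Tq - v) := by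
            have h := mul_le_mul_of_nonneg_left h2 hβ.le
            calc min (α i) (α j) * (Tq - g)
                = β * (min (α i) (α j) / β * (Tq - g)) := by field_simp
              _ ≤ β * (Tq - v) := h
          have h6 : m * (β - min (α i) (α j)) ≤ (1 - m) * β * min (α i) (α j) := by
            rcases le_total (α i) (α j) with hpq' | hpq'
            · rw [min_eq_left hpq', hβdef]
              have hw := wlemma m (α i) (α j) hm hq (hmle i hi) (by linarith only [hβ1m, hβdef.ge])
              linarith only [hw]
            · rw [min_eq_right hpq', hβdef]
              have hw := wlemma m (α j) (α i) hm hp (hmle j hjs) (by linarith only [hβ1m, hβdef.ge])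
              linarith only [hw]
          -- c1 : u i ^ α i * u j ^ α j = g ^ β
          have c1 : u i ^ α i * u j ^ α j = g ^ β := by
            rw [hgdef, Real.mul_rpow (Real.rpow_nonneg (hu i hi) _) (Real.rpow_nonneg (hu j hjs) _),
              ← Real.rpow_mul (hu i hi), ← Real.rpow_mul (hu j hjs),
              div_mul_cancel₀ _ hβ.ne', div_mul_cancel₀ _ hβ.ne']
          -- c2 : g ≤ v
          have c2 : g ≤ v := by
            have hgm := Real.geom_mean_le_arith_mean2_weighted
              (div_pos hp hβ).le (div_pos hq hβ).le ha hb hsβ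
            rw [hsv2] at hgm
            have e1 : u i ^ (α i / β) = (Real.sqrt (u i) ^ (α i / β)) ^ 2 := by
              conv_lhs => rw [← Real.sq_sqrt (hu i hi)]
              exact sq_rpow _ _ ha
            have e2 : u j ^ (α j / β) = (Real.sqrt (u j) ^ (α j / β)) ^ 2 := by
              conv_lhs => rw [← Real.sq_sqrt (hu j hjs)]
              exact sq_rpow _ _ hb
            have hgsq : g = (Real.sqrt (u i) ^ (α i / β) * Real.sqrt (u j) ^ (α j / β)) ^ 2 := by
              rw [hgdef, e1, e2]; ring
            rw [hgsq, hvdef]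
            exact pow_le_pow_left₀ (by positivity) hgm 2
          have c3 : 0 ≤ v ^ β - g ^ β :=
            sub_nonneg.mpr (Real.rpow_le_rpow hg0 c2 hβ.le)
          have hPle : (∏ r ∈ t, u r ^ α r) ≤ v ^ (1 - β) := by
            have h := Finset.prod_le_prod (s := t)
              (f := fun r => u r ^ α r) (g := fun r => v ^ α r)
              (fun r hr => Real.rpow_nonneg (hu r (hts r hr).1) _)
              (fun r hr => Real.rpow_le_rpow (hu r (hts r hr).1) (hurv r hr)
                (hα r (hts r hr).1).le)
            rwa [← Real.rpow_sum_of_pos hvpos α t, htα] at h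
          have c4 : (v ^ β - g ^ β) * (∏ r ∈ t, u r ^ α r) ≤ (v ^ β - g ^ β) * v ^ (1 - β) :=
            mul_le_mul_of_nonneg_left hPle c3
          have hvv : v ^ β * v ^ (1 - β) = v := by
            rw [← Real.rpow_add hvpos]
            norm_num
          have hgle : g ≤ g ^ β * v ^ (1 - β) := by
            by_cases hgz : g = 0
            · rw [hgz]; positivity
            · have hgpos : 0 < g := lt_of_le_of_ne hg0 (Ne.symm hgz)
              have h1 : g ^ (1 - β) ≤ v ^ (1 - β) :=
                Real.rpow_le_rpow hg0 c2 (by linarith)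
              have h2 : g ^ β * g ^ (1 - β) ≤ g ^ β * v ^ (1 - β) :=
                mul_le_mul_of_nonneg_left h1 (Real.rpow_nonneg hg0 _)
              have h3 : g ^ β * g ^ (1 - β) = g := by
                rw [← Real.rpow_add hgpos]; norm_num
              linarith only [h2, h3]
          have c5 : (v ^ β - g ^ β) * v ^ (1 - β) ≤ v - g := by
            have expand : (v ^ β - g ^ β) * v ^ (1 - β)
                = v ^ β * v ^ (1 - β) - g ^ β * v ^ (1 - β) := by ring
            rw [expand, hvv]
            linarith only [hgle]
          have c6 : m * (v - g) ≤ (1 - m) * β * (Tq - v) := by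
            have e1 := mul_le_mul_of_nonneg_left h5 hm.le
            have e2 := mul_le_mul_of_nonneg_right h6 hTv
            have hmain : min (α i) (α j) * (m * (v - g))
                ≤ min (α i) (α j) * ((1 - m) * β * (Tq - v)) := by linarith only [e1, e2]
            exact le_of_mul_le_mul_left hmain hminpos
          calc m * (v ^ β * (∏ r ∈ t, u r ^ α r) - u i ^ α i * u j ^ α j * ∏ r ∈ t, u r ^ α r)
              = m * ((v ^ β - g ^ β) * ∏ r ∈ t, u r ^ α r) := by rw [c1]; ring
            _ ≤ m * (v - g) := mul_le_mul_of_nonneg_left (le_trans c4 c5) hm.le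
            _ ≤ (1 - m) * β * (Tq - v) := c6
            _ = (1 - m) * (α i * u i + α j * u j - β * v) := by
                rw [mul_assoc, mul_sub, hβTq]
      -- assemble
      rw [hsum_s (fun r => α r * u r), hprod_s (fun r => u r ^ α r),
        hsum_s (fun r => α r * Real.sqrt (u r))]
      linarith only [hIH, hKEY]

theorem amgm_gap_le_variance (n : ℕ) (hn : 2 ≤ n)
    (x α : Fin n → ℝ) (hx : ∀ i, 0 ≤ x i)
    (hα : ∀ i, 0 < α i) (hsum : ∑ i, α i = 1) :
    ∑ i, α i * x i - ∏ i, x i ^ α i ≤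
      (1 / ⨅ i, α i) * (∑ i, α i * x i - (∑ i, α i * Real.sqrt (x i)) ^ 2) := by
  have hn0 : 0 < n := by omega
  haveI : Nonempty (Fin n) := ⟨⟨0, hn0⟩⟩
  obtain ⟨k, hk⟩ := Finite.exists_min α
  have hbdd : BddBelow (Set.range α) := Finite.bddBelow_range α
  have hmk : (⨅ i, α i) = α k :=
    le_antisymm (ciInf_le hbdd k) (le_ciInf hk)
  have hm : 0 < ⨅ i, α i := hmk ▸ hα k
  have hmle : ∀ i ∈ (Finset.univ : Finset (Fin n)), (⨅ i, α i) ≤ α i :=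
    fun i _ => ciInf_le hbdd i
  have hkey := key_ineq (⨅ i, α i) hm n Finset.univ α x
    (le_of_eq (Finset.card_univ.trans (Fintype.card_fin n)))
    (fun i _ => hα i) (fun i _ => hx i) hsum hmle
  rw [div_mul_eq_mul_div, le_div_iff₀ hm]
  calc (∑ i, α i * x i - ∏ i, x i ^ α i) * (⨅ i, α i)
      = (⨅ i, α i) * ((∑ i, α i * x i) - ∏ i, x i ^ α i) := by ring
    _ ≤ (∑ i, α i * x i) - (∑ i, α i * Real.sqrt (x i)) ^ 2 := hkey
    _ = 1 * ((∑ i, α i * x i) - (∑ i, α i * Real.sqrt (x i)) ^ 2) := by ring
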